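/- For every pair of agents i, j, the probability that v_i(A_j) − v_i(A_i) > 2·√(T·log T) is at most 4/T². In particular, for every ε > 0 there exists T₀ such that for all T ≥ T₀, with probability at least 1 − ε the pairwise envy max{v_i(A_j) − v_i(A_i), 0} is at most 2·√(T·log T), a quantity sublinear in T. -/

import Mathlib

open Finset MeasureTheory ProbabilityTheory

/-- `X` is a fractional allocation of `m` divisible item types to `n` agents. -/
def IsAlloc {n m : ℕ} (X : Fin n → Fin m → ℝ) : Prop :=
  (∀ i j, X i j ∈ Set.Icc (0 : ℝ) 1) ∧ ∀ j, ∑ i, X i j = 1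

/-- Agent `i`'s value for the (random) bundle received by agent `j`, when the `t`-th
item has type `κ t ω` and is given to agent `a t ω`. -/
def bundleVal {n m T : ℕ} {Ω : Type} (v : Fin n → Fin m → ℝ) (κ : Fin T → Ω → Fin m)
    (a : Fin T → Ω → Fin n) (i j : Fin n) (ω : Ω) : ℝ :=
  ∑ t, if a t ω = j then v i (κ t ω) else 0

/-- `T` i.i.d. items, where each item's (type, recipient) pair is drawn with
probability `μ(k, i) = f_k·X_{ik}`: item values and recipients `(κ_t, a_t)` are
independent across `t`, with the given one-dimensional law. -/
def IIDRounding {n m T : ℕ} (f : Fin m → ℝ) (X : Fin n → Fin m → ℝ)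
    {Ω : Type} [MeasurableSpace Ω] (P : Measure Ω)
    (κ : Fin T → Ω → Fin m) (a : Fin T → Ω → Fin n) : Prop :=
  (∀ t, Measurable fun ω => (κ t ω, a t ω)) ∧
  iIndepFun (fun t ω => (κ t ω, a t ω)) P ∧
  (∀ t k i, P {ω | κ t ω = k ∧ a t ω = i} = ENNReal.ofReal (f k * X i k))


lemma exp_mul_le_cosh_add (l y : ℝ) (hy : |y| ≤ 1) :
    Real.exp (l * y) ≤ Real.cosh l + y * Real.sinh l := by
  rw [abs_le] at hy
  have h := convexOn_exp.2 (Set.mem_univ (-l)) (Set.mem_univ l)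
    (show (0:ℝ) ≤ (1 - y) / 2 by linarith) (show (0:ℝ) ≤ (1 + y) / 2 by linarith)
    (by ring)
  simp only [smul_eq_mul] at h
  have h1 : (1 - y) / 2 * (-l) + (1 + y) / 2 * l = l * y := by ring
  rw [h1] at h
  refine h.trans_eq ?_
  rw [Real.cosh_eq, Real.sinh_eq]
  ring

/-- Suppose a fractional allocation `X` is envy-free w.r.t. the scaled valuations
`v'_{ik} = v_{ik}·f_k` and `T` i.i.d. items are allocated by giving an item of type
`k` to agent `i` with probability `X_{ik}`.  Then (1) for every pair of agents `i, j`,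
the probability that `v_i(A_j) − v_i(A_i) > 2√(T·log T)` is at most `4/T²`; and (2) for
every `ε > 0` there is a `T₀` such that for all `T ≥ T₀`, with probability at least
`1 − ε` the pairwise envy `max{v_i(A_j) − v_i(A_i), 0}` is at most `2√(T·log T)`. -/
theorem POR_vanishing_envy_whp (n m : ℕ) (hn : 1 ≤ n) (hm : 1 ≤ m)
    (f : Fin m → ℝ) (hf0 : ∀ k, 0 < f k) (hf1 : ∀ k, f k ≤ 1) (hfsum : ∑ k, f k = 1)
    (v : Fin n → Fin m → ℝ) (hv : ∀ i k, v i k ∈ Set.Icc (0 : ℝ) 1)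
    (X : Fin n → Fin m → ℝ) (hX : IsAlloc X)
    (hEF : ∀ i j : Fin n, ∑ k, v i k * f k * X j k ≤ ∑ k, v i k * f k * X i k) :
    (∀ T : ℕ, 2 ≤ T → ∀ (Ω : Type) [MeasurableSpace Ω] (P : Measure Ω)
        [IsProbabilityMeasure P] (κ : Fin T → Ω → Fin m) (a : Fin T → Ω → Fin n),
      IIDRounding f X P κ a →
      ∀ i j : Fin n,
        P {ω | 2 * Real.sqrt (T * Real.log T) <
            bundleVal v κ a i j ω - bundleVal v κ a i i ω} ≤
          ENNReal.ofReal (4 / (T : ℝ) ^ 2)) ∧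
    (∀ ε : ℝ, 0 < ε → ∃ T₀ : ℕ, ∀ T : ℕ, T₀ ≤ T →
      ∀ (Ω : Type) [MeasurableSpace Ω] (P : Measure Ω)
        [IsProbabilityMeasure P] (κ : Fin T → Ω → Fin m) (a : Fin T → Ω → Fin n),
      IIDRounding f X P κ a →
      ∀ i j : Fin n,
        ENNReal.ofReal (1 - ε) ≤
          P {ω | max (bundleVal v κ a i j ω - bundleVal v κ a i i ω) 0 ≤
              2 * Real.sqrt (T * Real.log T)}) := by
  have main : ∀ T : ℕ, 2 ≤ T → ∀ (Ω : Type) [MeasurableSpace Ω] (P : Measure Ω)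
      [IsProbabilityMeasure P] (κ : Fin T → Ω → Fin m) (a : Fin T → Ω → Fin n),
      IIDRounding f X P κ a →
      ∀ i j : Fin n,
        P {ω | 2 * Real.sqrt (T * Real.log T) <
            bundleVal v κ a i j ω - bundleVal v κ a i i ω} ≤
          ENNReal.ofReal (4 / (T : ℝ) ^ 2) := by
    intro T hT Ω _ P _ κ a hIID i j
    obtain ⟨hZmeas, hindep, hlaw⟩ := hIID
    have hT2 : (2:ℝ) ≤ (T:ℝ) := by exact_mod_cast hT
    have hTpos : (0:ℝ) < (T:ℝ) := by linarith
    set L : ℝ := Real.log T with hLdef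
    have hL : 0 ≤ L := Real.log_nonneg (by linarith)
    set s : ℝ := 2 * Real.sqrt (T * L) with hsdef
    have hs0 : 0 ≤ s := by positivity
    have hs2 : s ^ 2 = 4 * ((T:ℝ) * L) := by
      rw [hsdef, mul_pow, Real.sq_sqrt (by positivity)]; ring
    set lam : ℝ := s / T with hlamdef
    have hlam0 : 0 ≤ lam := by positivity
    set g : Fin m × Fin n → ℝ := fun p =>
      (if p.2 = j then v i p.1 else 0) - (if p.2 = i then v i p.1 else 0) with hgdef
    have hgabs : ∀ p, |g p| ≤ 1 := by
      rintro ⟨k, b⟩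
      have h1 := (hv i k).1
      have h2 := (hv i k).2
      rw [abs_le]
      constructor <;> (simp only [hgdef]; split_ifs <;> simp <;> linarith)
    have hμsum : ∀ (h : Fin m × Fin n → ℝ) (t : Fin T),
        ∫ ω, h (κ t ω, a t ω) ∂P = ∑ p : Fin m × Fin n, (f p.1 * X p.2 p.1) * h p := by
      intro h t
      have hmeas_h : Measurable h := measurable_of_finite h
      have hmap : IsProbabilityMeasure (P.map (fun ω => (κ t ω, a t ω))) :=
        Measure.isProbabilityMeasure_map (hZmeas t).aemeasurable
      rw [← integral_map (hZmeas t).aemeasurable hmeas_h.aestronglyMeasurable,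
        integral_fintype Integrable.of_finite]
      refine Finset.sum_congr rfl fun p _ => ?_
      have hset : (fun ω => (κ t ω, a t ω)) ⁻¹' {p} = {ω | κ t ω = p.1 ∧ a t ω = p.2} := by
        ext ω; simp [Prod.ext_iff]
      rw [measureReal_def, Measure.map_apply (hZmeas t) (measurableSet_singleton p), hset,
        hlaw t p.1 p.2, smul_eq_mul,
        ENNReal.toReal_ofReal (mul_nonneg (hf0 p.1).le ((hX.1 p.2 p.1).1))]
    have hμtot : ∑ p : Fin m × Fin n, f p.1 * X p.2 p.1 = 1 := by
      rw [Fintype.sum_prod_type]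
      calc ∑ k, ∑ b, f k * X b k = ∑ k, f k * ∑ b, X b k := by
            simp [Finset.mul_sum]
        _ = 1 := by simp [hX.2, hfsum]
    have hmean : ∑ p : Fin m × Fin n, (f p.1 * X p.2 p.1) * g p ≤ 0 := by
      have key : ∑ p : Fin m × Fin n, (f p.1 * X p.2 p.1) * g p
          = (∑ k, v i k * f k * X j k) - ∑ k, v i k * f k * X i k := by
        rw [Fintype.sum_prod_type, ← Finset.sum_sub_distrib]
        refine Finset.sum_congr rfl fun k _ => ?_
        simp only [hgdef, mul_sub, mul_ite, mul_zero, Finset.sum_sub_distrib,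
          Finset.sum_ite_eq', Finset.mem_univ, if_true]
        ring
      rw [key]
      have := hEF i j
      linarith
    set Y : Fin T → Ω → ℝ := fun t ω => g (κ t ω, a t ω) with hYdef
    have hYmeas : ∀ t : Fin T, Measurable (Y t) :=
      fun t => (measurable_of_finite g).comp (hZmeas t)
    have hYindep : iIndepFun Y P :=
      hindep.comp (fun _ => g) (fun _ => measurable_of_finite g)
    have hsinh : 0 ≤ Real.sinh lam := by
      rw [← Real.sinh_zero]
      exact Real.sinh_le_sinh.2 hlam0
    have hmgf : ∀ t : Fin T, mgf (Y t) P lam ≤ Real.exp (lam ^ 2 / 2) := by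
      intro t
      have h1 : mgf (Y t) P lam
          = ∑ p : Fin m × Fin n, (f p.1 * X p.2 p.1) * Real.exp (lam * g p) :=
        hμsum (fun p => Real.exp (lam * g p)) t
      rw [h1]
      calc ∑ p : Fin m × Fin n, (f p.1 * X p.2 p.1) * Real.exp (lam * g p)
          ≤ ∑ p : Fin m × Fin n, (f p.1 * X p.2 p.1)
              * (Real.cosh lam + g p * Real.sinh lam) := by
            refine Finset.sum_le_sum fun p _ => ?_
            exact mul_le_mul_of_nonneg_left (exp_mul_le_cosh_add lam (g p) (hgabs p))
              (mul_nonneg (hf0 p.1).le ((hX.1 p.2 p.1).1))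
        _ = Real.cosh lam
            + (∑ p : Fin m × Fin n, (f p.1 * X p.2 p.1) * g p) * Real.sinh lam := by
            simp only [mul_add, Finset.sum_add_distrib, ← mul_assoc, ← Finset.sum_mul,
              hμtot, one_mul]
        _ ≤ Real.cosh lam := by nlinarith [mul_nonneg hsinh (neg_nonneg.2 hmean)]
        _ ≤ Real.exp (lam ^ 2 / 2) := Real.cosh_le_exp_half_sq lam
    have hDeq : ∀ ω, bundleVal v κ a i j ω - bundleVal v κ a i i ω = ∑ t, Y t ω := by
      intro ω
      simp only [bundleVal, hYdef, hgdef, ← Finset.sum_sub_distrib]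
    have hSmeas : Measurable fun ω => ∑ t, Y t ω :=
      Finset.measurable_sum _ (fun t _ => hYmeas t)
    have hint_sum : Integrable (fun ω => Real.exp (lam * ∑ t, Y t ω)) P := by
      refine Integrable.mono' (integrable_const (Real.exp (lam * T)))
        ((hSmeas.const_mul lam).exp.aestronglyMeasurable) (ae_of_all _ fun ω => ?_)
      rw [Real.norm_eq_abs, Real.abs_exp]
      refine Real.exp_le_exp.2 (mul_le_mul_of_nonneg_left ?_ hlam0)
      calc ∑ t, Y t ω ≤ ∑ _t : Fin T, (1:ℝ) :=
            Finset.sum_le_sum fun t _ => (abs_le.1 (hgabs _)).2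
        _ = (T:ℝ) := by simp
    have hcher := measure_ge_le_exp_mul_mgf (μ := P) (X := fun ω => ∑ t, Y t ω)
      s hlam0 hint_sum
    have hprod : mgf (fun ω => ∑ t, Y t ω) P lam ≤ Real.exp (lam ^ 2 / 2) ^ T := by
      have h1 : (fun ω => ∑ t, Y t ω) = ∑ t, Y t := by
        funext ω; simp
      rw [h1, hYindep.mgf_sum hYmeas Finset.univ]
      calc ∏ t : Fin T, mgf (Y t) P lam ≤ ∏ _t : Fin T, Real.exp (lam ^ 2 / 2) :=
            Finset.prod_le_prod (fun t _ => mgf_nonneg) (fun t _ => hmgf t)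
        _ = Real.exp (lam ^ 2 / 2) ^ T := by simp
    have hT0 : (T:ℝ) ≠ 0 := ne_of_gt hTpos
    have harg : -lam * s + (T:ℝ) * (lam ^ 2 / 2) = -(2 * L) := by
      rw [hlamdef]
      have h4 : -(s / T) * s + (T:ℝ) * ((s / T) ^ 2 / 2) = -(s ^ 2) / (2 * T) := by
        field_simp
        ring
      rw [h4, hs2]
      field_simp
      ring
    have hexpval : Real.exp (-(2 * L)) = 1 / (T:ℝ) ^ 2 := by
      have : -(2 * L) = (2:ℕ) * (-L) := by push_cast; ring
      rw [this, Real.exp_nat_mul, Real.exp_neg, hLdef, Real.exp_log hTpos]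
      rw [inv_pow]
      exact (one_div _).symm
    have hexp : Real.exp (-lam * s) * Real.exp (lam ^ 2 / 2) ^ T ≤ 4 / (T:ℝ) ^ 2 := by
      rw [← Real.exp_nat_mul, ← Real.exp_add, harg, hexpval]
      gcongr
      norm_num
    rw [ENNReal.le_ofReal_iff_toReal_le (measure_ne_top P _) (by positivity)]
    calc (P {ω | s < bundleVal v κ a i j ω - bundleVal v κ a i i ω}).toReal
        ≤ (P {ω | s ≤ ∑ t, Y t ω}).toReal := by
          refine ENNReal.toReal_mono (measure_ne_top P _) (measure_mono ?_)
          intro ω hω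
          simp only [Set.mem_setOf_eq] at hω ⊢
          rw [← hDeq ω]
          exact hω.le
      _ ≤ Real.exp (-lam * s) * mgf (fun ω => ∑ t, Y t ω) P lam := hcher
      _ ≤ Real.exp (-lam * s) * Real.exp (lam ^ 2 / 2) ^ T :=
          mul_le_mul_of_nonneg_left hprod (Real.exp_nonneg _)
      _ ≤ 4 / (T:ℝ) ^ 2 := hexp
  refine ⟨main, ?_⟩
  intro ε hε
  refine ⟨max 2 ⌈4 / ε⌉₊, ?_⟩
  intro T hT Ω _ P _ κ a hIID i j
  have hT2 : 2 ≤ T := le_trans (le_max_left _ _) hT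
  have hTR : (2:ℝ) ≤ (T:ℝ) := by exact_mod_cast hT2
  have hTpos : (0:ℝ) < (T:ℝ) := by linarith
  have hεT : 4 / (T:ℝ) ^ 2 ≤ ε := by
    have h1 : (4 / ε : ℝ) ≤ (T:ℝ) := by
      refine le_trans (Nat.le_ceil _) ?_
      exact_mod_cast le_trans (le_max_right 2 ⌈4 / ε⌉₊) hT
    have h2 : 4 ≤ ε * T := by
      rw [div_le_iff₀ hε] at h1
      linarith
    rw [div_le_iff₀ (by positivity)]
    nlinarith
  set s := 2 * Real.sqrt (T * Real.log T) with hsdef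
  have hs0 : 0 ≤ s := by positivity
  have hbad := main T hT2 Ω P κ a hIID i j
  have hmeasD : Measurable fun ω => bundleVal v κ a i j ω - bundleVal v κ a i i ω := by
    have hb : ∀ (j' : Fin n), Measurable fun ω => bundleVal v κ a i j' ω := by
      intro j'
      unfold bundleVal
      refine Finset.measurable_sum _ fun t _ => ?_
      exact (measurable_of_finite
        (fun p : Fin m × Fin n => if p.2 = j' then v i p.1 else 0)).comp (hIID.1 t)
    exact (hb j).sub (hb i)
  have hmb : MeasurableSet {ω | s < bundleVal v κ a i j ω - bundleVal v κ a i i ω} :=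
    measurableSet_lt measurable_const hmeasD
  calc ENNReal.ofReal (1 - ε) ≤ 1 - ENNReal.ofReal (4 / (T:ℝ) ^ 2) := by
        rw [← ENNReal.ofReal_one, ← ENNReal.ofReal_sub _ (by positivity)]
        exact ENNReal.ofReal_le_ofReal (by linarith)
    _ ≤ 1 - P {ω | s < bundleVal v κ a i j ω - bundleVal v κ a i i ω} :=
        tsub_le_tsub_left hbad 1
    _ = P {ω | s < bundleVal v κ a i j ω - bundleVal v κ a i i ω}ᶜ :=
        (prob_compl_eq_one_sub hmb).symm
    _ ≤ P {ω | max (bundleVal v κ a i j ω - bundleVal v κ a i i ω) 0 ≤ s} := by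
        refine measure_mono fun ω hω => ?_
        simp only [Set.mem_compl_iff, Set.mem_setOf_eq, not_lt] at hω ⊢
        exact max_le hω hs0
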